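/- Let R be a commutative integral domain with field of fractions K, let C be an m×n matrix over K, and let n₀, d ∈ R be coprime (i.e., there exist x, y ∈ R with n₀·x + d·y = 1) with d ≠ 0. Set g = n₀/d ∈ K. If there exist matrices A ∈ R^{n×n} and B ∈ R^{n×m} such that g·I = A + B·C, then there exist matrices A₀ ∈ R^{n×n} and B₀ ∈ R^{n×m} such that d⁻¹·I = A₀ + B₀·C. -/

import Mathlib

theorem stmt_6 (R : Type*) [CommRing R] [IsDomain R]
    (K : Type*) [Field K] [Algebra R K] [IsFractionRing R K]
    (m n : ℕ) (C : Matrix (Fin m) (Fin n) K)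
    (n₀ d x y : R) (hco : n₀ * x + d * y = 1) (hd : d ≠ 0)
    (g : K) (hgdef : g = algebraMap R K n₀ / algebraMap R K d)
    (A : Matrix (Fin n) (Fin n) R) (B : Matrix (Fin n) (Fin m) R)
    (h : g • (1 : Matrix (Fin n) (Fin n) K)
        = A.map (algebraMap R K) + B.map (algebraMap R K) * C) :
    ∃ (A₀ : Matrix (Fin n) (Fin n) R) (B₀ : Matrix (Fin n) (Fin m) R),
      (algebraMap R K d)⁻¹ • (1 : Matrix (Fin n) (Fin n) K)
        = A₀.map (algebraMap R K) + B₀.map (algebraMap R K) * C := by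
  have hdK : algebraMap R K d ≠ 0 := by
    simpa using (map_ne_zero_iff _ (IsFractionRing.injective R K)).mpr hd
  refine ⟨x • A + y • (1 : Matrix (Fin n) (Fin n) R), x • B, ?_⟩
  have hmapA : (x • A).map (algebraMap R K) = (algebraMap R K x) • A.map (algebraMap R K) := by
    ext i j; simp [Matrix.map_apply, Matrix.smul_apply, smul_eq_mul]
  have hmapB : (x • B).map (algebraMap R K) = (algebraMap R K x) • B.map (algebraMap R K) := by
    ext i j; simp [Matrix.map_apply, Matrix.smul_apply, smul_eq_mul]
  have hmap1 : (y • (1 : Matrix (Fin n) (Fin n) R)).map (algebraMap R K)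
      = (algebraMap R K y) • (1 : Matrix (Fin n) (Fin n) K) := by
    ext i j
    rcases eq_or_ne i j with rfl | hij
    · simp [Matrix.map_apply, Matrix.smul_apply, smul_eq_mul]
    · simp [Matrix.map_apply, Matrix.smul_apply, Matrix.one_apply, hij]
  rw [Matrix.map_add _ (map_add _), hmapA, hmapB, hmap1, Matrix.smul_mul, add_right_comm, ← smul_add, ← h]
  have hscal : (algebraMap R K d)⁻¹ = algebraMap R K x * g + algebraMap R K y := by
    rw [hgdef]
    field_simp
    rw [← map_mul, ← map_mul, ← map_add]
    rw [show x * n₀ + d * y = 1 by linear_combination hco]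
    simp
  rw [hscal, add_smul, smul_smul]
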